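/- Let α, β be real numbers with α > 1 and β > 1. If α^n − β^n is an integer for every n ≥ n_0 (for some n_0), then either α = β, or both α and β are integers. -/

import Mathlib

lemma den_one_of_pow_mul_int' (q : ℚ) (w : ℤ) (hw : w ≠ 0)
    (H : ∀ n : ℕ, ∃ z : ℤ, q ^ n * (w : ℚ) = z) : q.den = 1 := by
  by_contra hden
  have h2 : 2 ≤ q.den := by
    have := q.den_pos
    omega
  set n := w.natAbs with hn
  obtain ⟨z, hz⟩ := H n
  have key : q.num ^ n * w = z * (q.den : ℤ) ^ n := by
    have := congrArg (· * (q.den : ℚ) ^ n) hz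
    have h1 : q ^ n * (w : ℚ) * (q.den : ℚ) ^ n = (q.num : ℚ) ^ n * w := by
      rw [mul_comm (q ^ n) ((w : ℚ))]
      rw [mul_assoc, ← mul_pow, Rat.mul_den_eq_num]
      ring
    rw [h1] at this
    exact_mod_cast this
  have hdvd : (q.den : ℤ) ^ n ∣ w * q.num ^ n := by
    rw [mul_comm] at key
    exact ⟨z, by linarith [key]⟩
  have hcop : IsCoprime ((q.den : ℤ) ^ n) (q.num ^ n) := by
    apply IsCoprime.pow
    rw [Int.isCoprime_iff_gcd_eq_one, Int.gcd]
    simpa [Nat.coprime_comm] using q.reduced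
  have hdw : (q.den : ℤ) ^ n ∣ w := hcop.dvd_of_dvd_mul_right hdvd
  have hdwn : q.den ^ n ∣ n := by
    have := Int.natAbs_dvd_natAbs.mpr hdw
    simpa [Int.natAbs_pow] using this
  have hle : q.den ^ n ≤ n := Nat.le_of_dvd (by positivity) hdwn
  have : n < 2 ^ n := Nat.lt_two_pow_self (n := n)
  have : 2 ^ n ≤ q.den ^ n := Nat.pow_le_pow_left h2 n
  omega


lemma int_of_rat_case' (a b : ℚ) (hne : a ≠ b) (n₀ : ℕ)
    (H : ∀ n : ℕ, n₀ ≤ n → ∃ z : ℤ, a ^ n - b ^ n = z) :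
    (∃ x : ℤ, a = x) ∧ (∃ y : ℤ, b = y) := by
  set A := a.num with hA
  set B := b.num with hB
  set c := a.den with hc
  set d := b.den with hd
  have hc0 : (c : ℤ) ≠ 0 := by exact_mod_cast a.den_pos.ne'
  have hd0 : (d : ℤ) ≠ 0 := by exact_mod_cast b.den_pos.ne'
  -- clear denominators
  have key : ∀ n, n₀ ≤ n → ∃ z : ℤ, A ^ n * (d:ℤ) ^ n - B ^ n * (c:ℤ) ^ n
      = z * ((c:ℤ) ^ n * (d:ℤ) ^ n) := by
    intro n hn
    obtain ⟨z, hz⟩ := H n hn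
    refine ⟨z, ?_⟩
    have h1 : (a ^ n - b ^ n) * ((c:ℚ) ^ n * (d:ℚ) ^ n) = z * ((c:ℚ) ^ n * (d:ℚ) ^ n) := by
      rw [hz]
    have h2 : (a ^ n - b ^ n) * ((c:ℚ) ^ n * (d:ℚ) ^ n)
        = (A:ℚ) ^ n * (d:ℚ) ^ n - (B:ℚ) ^ n * (c:ℚ) ^ n := by
      have pa : a * (c:ℚ) = (A:ℚ) := Rat.mul_den_eq_num a
      have pb : b * (d:ℚ) = (B:ℚ) := Rat.mul_den_eq_num b
      calc (a ^ n - b ^ n) * ((c:ℚ) ^ n * (d:ℚ) ^ n)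
          = (a * c) ^ n * (d:ℚ) ^ n - (b * d) ^ n * (c:ℚ) ^ n := by ring
        _ = (A:ℚ) ^ n * (d:ℚ) ^ n - (B:ℚ) ^ n * (c:ℚ) ^ n := by rw [pa, pb]
    rw [h2] at h1
    exact_mod_cast h1
  have hcopA : IsCoprime ((c:ℤ)) A := by
    rw [Int.isCoprime_iff_gcd_eq_one, Int.gcd]
    simpa [Nat.coprime_comm] using a.reduced
  have hcopB : IsCoprime ((d:ℤ)) B := by
    rw [Int.isCoprime_iff_gcd_eq_one, Int.gcd]
    simpa [Nat.coprime_comm] using b.reduced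
  -- c = d
  have hcd : c = d := by
    have hcdvd : ∀ n, n₀ ≤ n → (c:ℤ) ^ n ∣ (d:ℤ) ^ n := by
      intro n hn
      obtain ⟨z, hz⟩ := key n hn
      have h1 : (c:ℤ) ^ n ∣ A ^ n * (d:ℤ) ^ n := by
        refine ⟨z * (d:ℤ) ^ n + B ^ n, ?_⟩
        linarith [hz]
      exact ((hcopA.pow).dvd_of_dvd_mul_left h1)
    have hddvd : ∀ n, n₀ ≤ n → (d:ℤ) ^ n ∣ (c:ℤ) ^ n := by
      intro n hn
      obtain ⟨z, hz⟩ := key n hn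
      have h1 : (d:ℤ) ^ n ∣ B ^ n * (c:ℤ) ^ n := by
        refine ⟨-(z * (c:ℤ) ^ n) + A ^ n, ?_⟩
        linarith [hz]
      exact ((hcopB.pow).dvd_of_dvd_mul_left h1)
    have h1 := hcdvd (n₀+1) (by omega)
    have h2 := hddvd (n₀+1) (by omega)
    have h1' : c ∣ d := by
      have := Int.natAbs_dvd_natAbs.mpr h1
      simp only [Int.natAbs_pow, Int.natAbs_natCast] at this
      exact (Nat.pow_dvd_pow_iff (by omega)).mp this
    have h2' : d ∣ c := by
      have := Int.natAbs_dvd_natAbs.mpr h2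
      simp only [Int.natAbs_pow, Int.natAbs_natCast] at this
      exact (Nat.pow_dvd_pow_iff (by omega)).mp this
    exact Nat.dvd_antisymm h1' h2'
  -- now c = d, derive c^n ∣ A^n - B^n
  have key2 : ∀ n, n₀ ≤ n → (c:ℤ) ^ n ∣ A ^ n - B ^ n := by
    intro n hn
    obtain ⟨z, hz⟩ := key n hn
    rw [← hcd] at hz
    refine ⟨z, ?_⟩
    apply mul_right_cancel₀ (pow_ne_zero n hc0)
    calc (A ^ n - B ^ n) * (c:ℤ) ^ n = A ^ n * (c:ℤ) ^ n - B ^ n * (c:ℤ) ^ n := by ring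
      _ = z * ((c:ℤ) ^ n * (c:ℤ) ^ n) := hz
      _ = (c:ℤ) ^ n * z * (c:ℤ) ^ n := by ring
  -- A ≠ B
  have hAB : A ≠ B := by
    intro hEq
    exact hne (Rat.ext hEq hcd)
  -- c^n ∣ A - B for all n ≥ n₀
  have key3 : ∀ n, n₀ ≤ n → (c:ℤ) ^ n ∣ A - B := by
    intro n hn
    have d1 : (c:ℤ) ^ n ∣ A ^ (n+1) - B ^ (n+1) := by
      have := key2 (n+1) (by omega)
      exact dvd_trans (pow_dvd_pow _ (by omega)) this
    have d2 : (c:ℤ) ^ n ∣ A * (A ^ n - B ^ n) := Dvd.dvd.mul_left (key2 n hn) A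
    have d3 : (c:ℤ) ^ n ∣ B ^ n * (A - B) := by
      have heq : B ^ n * (A - B) = (A ^ (n+1) - B ^ (n+1)) - A * (A ^ n - B ^ n) := by ring
      rw [heq]
      exact dvd_sub d1 d2
    have hcopCB : IsCoprime ((c:ℤ) ^ n) (B ^ n) := by
      have : IsCoprime ((c:ℤ)) B := by rw [hcd]; exact hcopB
      exact this.pow
    exact hcopCB.dvd_of_dvd_mul_left d3
  -- conclude c = 1
  have hc1 : c = 1 := by
    by_contra hcne
    have h2c : 2 ≤ c := by have := a.den_pos; omega
    set m := (A - B).natAbs with hm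
    have hdvd := key3 (n₀ + m) (by omega)
    have : c ^ (n₀ + m) ∣ m := by
      have := Int.natAbs_dvd_natAbs.mpr hdvd
      simpa [Int.natAbs_pow] using this
    have hle : c ^ (n₀ + m) ≤ m := Nat.le_of_dvd (by
      simp only [hm, Int.natAbs_pos]
      omega) this
    have h1 : m < 2 ^ m := Nat.lt_two_pow_self (n := m)
    have h2 : 2 ^ m ≤ 2 ^ (n₀ + m) := Nat.pow_le_pow_right (by omega) (by omega)
    have h3 : 2 ^ (n₀ + m) ≤ c ^ (n₀ + m) := Nat.pow_le_pow_left h2c _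
    omega
  have hd1 : b.den = 1 := by omega
  have hc1' : a.den = 1 := by omega
  exact ⟨⟨A, ((Rat.den_eq_one_iff a).mp hc1').symm⟩, ⟨B, ((Rat.den_eq_one_iff b).mp hd1).symm⟩⟩


def lucasU' (s p : ℚ) : ℕ → ℚ
  | 0 => 0
  | 1 => 1
  | (n+2) => s * lucasU' s p (n+1) - p * lucasU' s p n

lemma lucasU_spec' (α β : ℝ) (s p : ℚ) (hs : (s:ℝ) = α + β) (hp : (p:ℝ) = α * β) :
    ∀ n : ℕ, (lucasU' s p n : ℝ) * (α - β) = α ^ n - β ^ n := by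
  intro n
  induction n using Nat.twoStepInduction with
  | zero => simp [lucasU']
  | one => simp [lucasU']
  | more n ih1 ih2 =>
    have hU : (lucasU' s p (n+2) : ℝ) = s * (lucasU' s p (n+1) : ℝ) - p * (lucasU' s p n : ℝ) := by
      rw [show lucasU' s p (n+2) = s * lucasU' s p (n+1) - p * lucasU' s p n from rfl]
      push_cast
      ring
    rw [hU, hs, hp]
    have e1 : α ^ (n+2) = α ^ n * α * α := by ring
    linear_combination (α + β) * ih2 - (α * β) * ih1

lemma aux_main (α β : ℝ) (hβ : 1 < β) (hab : β < α) (n₀ : ℕ)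
    (h : ∀ n : ℕ, n₀ ≤ n → ∃ z : ℤ, α ^ n - β ^ n = z) :
    (∃ a : ℤ, α = a) ∧ (∃ b : ℤ, β = b) := by
  have hα : 1 < α := hβ.trans hab
  have hβ0 : (0:ℝ) < β := lt_trans one_pos hβ
  have hα0 : (0:ℝ) < α := lt_trans one_pos hα
  have hd0 : (0:ℝ) < α - β := sub_pos.mpr hab
  -- choose integer values
  have h' : ∀ n : ℕ, ∃ z : ℤ, n₀ ≤ n → α ^ n - β ^ n = z := by
    intro n
    by_cases hn : n₀ ≤ n
    · exact ⟨(h n hn).choose, fun _ => (h n hn).choose_spec⟩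
    · exact ⟨0, fun hc => absurd hc hn⟩
  choose u hu using h'
  have hupos : ∀ n : ℕ, n₀ ≤ n → 1 ≤ n → (0:ℝ) < (u n : ℝ) := by
    intro n hn hn1
    rw [← hu n hn]
    have : β ^ n < α ^ n := pow_lt_pow_left₀ hab hβ0.le (by omega)
    linarith
  -- the sequence v
  set v : ℕ → ℤ := fun n => u (n+2) * u n - u (n+1) ^ 2 with hvdef
  have hv : ∀ n : ℕ, n₀ ≤ n → (v n : ℝ) = -((α*β) ^ n * (α - β) ^ 2) := by
    intro n hn
    have e0 := hu n hn
    have e1 := hu (n+1) (by omega)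
    have e2 := hu (n+2) (by omega)
    have : (v n : ℝ) = (α ^ (n+2) - β ^ (n+2)) * (α ^ n - β ^ n)
        - (α ^ (n+1) - β ^ (n+1)) ^ 2 := by
      push_cast [hvdef]
      rw [← e0, ← e1, ← e2]
    rw [this, mul_pow]
    ring
  have hvneg : (v n₀ : ℝ) < 0 := by
    rw [hv n₀ le_rfl]
    have h1 : (0:ℝ) < (α*β) ^ n₀ := by positivity
    have h2 : (0:ℝ) < (α - β) ^ 2 := by positivity
    nlinarith [mul_pos h1 h2]
  have hvne : v n₀ ≠ 0 := by
    intro hc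
    rw [hc] at hvneg
    norm_num at hvneg
  -- the product p = αβ is an integer
  set q : ℚ := (v (n₀+1) : ℚ) / (v n₀ : ℚ) with hqdef
  have hvQ : ((v n₀ : ℚ) : ℝ) ≠ 0 := by
    push_cast
    exact hvneg.ne
  have hq : (q : ℝ) = α * β := by
    rw [hqdef]
    push_cast
    rw [div_eq_iff (by push_cast at hvQ ⊢; exact hvQ)]
    rw [hv (n₀+1) (by omega), hv n₀ le_rfl]
    ring
  have hgeo : ∀ k : ℕ, ∃ z : ℤ, q ^ k * ((v n₀ : ℤ) : ℚ) = z := by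
    intro k
    refine ⟨v (n₀ + k), ?_⟩
    have : ((q ^ k * ((v n₀ : ℤ) : ℚ) : ℚ) : ℝ) = ((v (n₀ + k) : ℤ) : ℝ) := by
      push_cast
      rw [hq, hv (n₀ + k) (by omega), hv n₀ le_rfl, pow_add]
      ring
    exact_mod_cast this
  have hqden : q.den = 1 := den_one_of_pow_mul_int' q (v n₀) hvne hgeo
  obtain ⟨hqnum⟩ : ∃ _ : Unit, True := ⟨(), trivial⟩
  set p : ℤ := q.num with hpdef
  have hpq : ((p : ℚ) : ℝ) = α * β := by
    rw [hpdef, (Rat.den_eq_one_iff q).mp hqden]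
    exact hq
  -- the sum s = α + β is rational
  have hu1R : ((u (n₀+1) : ℤ) : ℝ) ≠ 0 := (hupos (n₀+1) (by omega) (by omega)).ne'
  set qs : ℚ := ((u (n₀+2) : ℚ) + (p:ℚ) * (u n₀ : ℚ)) / (u (n₀+1) : ℚ) with hqsdef
  have hqs : (qs : ℝ) = α + β := by
    rw [hqsdef]
    push_cast
    rw [div_eq_iff (by exact_mod_cast hu1R)]
    have e0 := hu n₀ le_rfl
    have e1 := hu (n₀+1) (by omega)
    have e2 := hu (n₀+2) (by omega)
    have hpR : ((p:ℤ):ℝ) = α * β := by exact_mod_cast hpq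
    rw [← e0, ← e1, ← e2, hpR]
    ring
  -- α - β is rational
  set N := n₀ + 1 with hNdef
  have hUspec := lucasU_spec' α β qs (p:ℚ) hqs (by exact_mod_cast hpq)
  have hUN : ((lucasU' qs (p:ℚ) N : ℚ) : ℝ) ≠ 0 := by
    intro hc
    have := hUspec N
    rw [hc, zero_mul] at this
    have hlt : β ^ N < α ^ N := pow_lt_pow_left₀ hab hβ0.le (by omega)
    linarith
  set qd : ℚ := (u N : ℚ) / lucasU' qs (p:ℚ) N with hqddef
  have hqd : (qd : ℝ) = α - β := by
    rw [hqddef]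
    push_cast
    rw [div_eq_iff (by exact_mod_cast hUN)]
    rw [← hu N (by omega)]
    rw [← hUspec N]
    ring
  -- α and β are rational
  set qa : ℚ := (qs + qd) / 2 with hqadef
  set qb : ℚ := (qs - qd) / 2 with hqbdef
  have hqa : (qa : ℝ) = α := by rw [hqadef]; push_cast; rw [hqs, hqd]; ring
  have hqb : (qb : ℝ) = β := by rw [hqbdef]; push_cast; rw [hqs, hqd]; ring
  have hne : qa ≠ qb := by
    intro hc
    have : (qa : ℝ) = (qb : ℝ) := by rw [hc]
    rw [hqa, hqb] at this
    linarith
  have H : ∀ n : ℕ, n₀ ≤ n → ∃ z : ℤ, qa ^ n - qb ^ n = z := by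
    intro n hn
    refine ⟨u n, ?_⟩
    have : ((qa ^ n - qb ^ n : ℚ) : ℝ) = ((u n : ℤ) : ℝ) := by
      push_cast
      rw [hqa, hqb, ← hu n hn]
    exact_mod_cast this
  obtain ⟨⟨x, hx⟩, ⟨y, hy⟩⟩ := int_of_rat_case' qa qb hne n₀ H
  refine ⟨⟨x, ?_⟩, ⟨y, ?_⟩⟩
  · rw [← hqa, hx]; push_cast; ring
  · rw [← hqb, hy]; push_cast; ring


theorem eq_or_int_of_pow_sub_pow_int
    (α β : ℝ) (hα : 1 < α) (hβ : 1 < β) (n₀ : ℕ)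
    (h : ∀ n : ℕ, n₀ ≤ n → ∃ z : ℤ, α ^ n - β ^ n = z) :
    α = β ∨ ((∃ a : ℤ, α = a) ∧ (∃ b : ℤ, β = b)) := by
  rcases lt_trichotomy α β with hlt | heq | hgt
  · right
    have h' : ∀ n : ℕ, n₀ ≤ n → ∃ z : ℤ, β ^ n - α ^ n = z := by
      intro n hn
      obtain ⟨z, hz⟩ := h n hn
      exact ⟨-z, by push_cast; linarith⟩
    obtain ⟨hb, ha⟩ := aux_main β α hα hlt n₀ h'
    exact ⟨ha, hb⟩
  · exact Or.inl heq
  · exact Or.inr (aux_main α β hβ hgt n₀ h)
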